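/- Let A be a nonnegative regular summability matrix, (X,d) a metric space, and x = (x_k) a sequence in X that is A-statistically bounded, i.e., there exists a compact subset C of X such that δ_A({k ∈ ℕ : x_k ∉ C}) = 0. Then the set Γ_x^A of A-statistical cluster points of x is nonempty and compact; moreover Γ_x^A ⊆ C. -/

import Mathlib

open Filter Topology

/-- `a` is a nonnegative regular summability matrix. -/
def IsRegularMatrix (a : ℕ → ℕ → ℝ) : Prop :=
  (∀ n k, 0 ≤ a n k) ∧
  (∀ n, Summable (a n)) ∧
  (∃ C : ℝ, ∀ n, ∑' k, a n k ≤ C) ∧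
  (∀ k, Tendsto (fun n => a n k) atTop (𝓝 0)) ∧
  Tendsto (fun n => ∑' k, a n k) atTop (𝓝 1)

/-- The set `B ⊆ ℕ` has `A`-density `d`: `lim_n Σ_{k ∈ B} a n k = d`. -/
def HasADensity (a : ℕ → ℕ → ℝ) (B : Set ℕ) (d : ℝ) : Prop :=
  Tendsto (fun n => ∑' k, Set.indicator B (a n) k) atTop (𝓝 d)

/-- `x` is `A`-statistically convergent to `L`. -/
def AStatTendsto {X : Type*} [MetricSpace X] (a : ℕ → ℕ → ℝ) (x : ℕ → X) (L : X) : Prop :=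
  ∀ ε > 0, HasADensity a {k | ε ≤ dist (x k) L} 0

/-- `x` is `A`-statistically Cauchy. -/
def AStatCauchy {X : Type*} [MetricSpace X] (a : ℕ → ℕ → ℝ) (x : ℕ → X) : Prop :=
  ∀ ε > 0, ∃ k₀ : ℕ, HasADensity a {k | ε ≤ dist (x k) (x k₀)} 0

/-- `p` is an `A`-statistical limit point of `x`: some subsequence of `x` indexed by an
(infinite) index set not having `A`-density zero converges to `p`. -/
def AStatLimitPt {X : Type*} [MetricSpace X] (a : ℕ → ℕ → ℝ) (x : ℕ → X) (p : X) : Prop :=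
  ∃ q : ℕ → ℕ, StrictMono q ∧ ¬ HasADensity a (Set.range q) 0 ∧
    Tendsto (fun n => x (q n)) atTop (𝓝 p)

/-- `p` is an `A`-statistical cluster point of `x`. -/
def AStatClusterPt {X : Type*} [MetricSpace X] (a : ℕ → ℕ → ℝ) (x : ℕ → X) (p : X) : Prop :=
  ∀ ε > 0, ¬ HasADensity a {k | dist (x k) p < ε} 0

/-- `p` is an ordinary limit point of the sequence `x`: some subsequence converges to `p`. -/
def OrdLimitPt {X : Type*} [MetricSpace X] (x : ℕ → X) (p : X) : Prop :=
  ∃ q : ℕ → ℕ, StrictMono q ∧ Tendsto (fun n => x (q n)) atTop (𝓝 p)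

/-- `x` is strongly `A`-summable to `L`: `lim_j Σ_k a j k * d(x k, L) = 0`. -/
def StrongASummable {X : Type*} [MetricSpace X] (a : ℕ → ℕ → ℝ) (x : ℕ → X) (L : X) : Prop :=
  Tendsto (fun j => ∑' k, a j k * dist (x k) L) atTop (𝓝 0)

lemma dens_mono {a : ℕ → ℕ → ℝ} (hA : IsRegularMatrix a) {B B' : Set ℕ} (h : B ⊆ B')
    (hd : HasADensity a B' 0) : HasADensity a B 0 := by
  obtain ⟨hpos, hsum, -⟩ := hA
  refine squeeze_zero
    (fun n => tsum_nonneg fun k => Set.indicator_nonneg (fun k _ => hpos n k) k)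
    (fun n => Summable.tsum_le_tsum
      (fun k => Set.indicator_le_indicator_of_subset h (fun k => hpos n k) k)
      ((hsum n).indicator B) ((hsum n).indicator B')) hd

lemma dens_union {a : ℕ → ℕ → ℝ} (hA : IsRegularMatrix a) {B B' : Set ℕ}
    (hd : HasADensity a B 0) (hd' : HasADensity a B' 0) : HasADensity a (B ∪ B') 0 := by
  obtain ⟨hpos, hsum, -⟩ := hA
  have key : ∀ n k, Set.indicator (B ∪ B') (a n) k ≤
      Set.indicator B (a n) k + Set.indicator B' (a n) k := by
    intro n k
    classical
    by_cases hB : k ∈ B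
    · rw [Set.indicator_of_mem (Set.mem_union_left B' hB), Set.indicator_of_mem hB]
      have := Set.indicator_nonneg (s := B') (fun k (_ : k ∈ B') => hpos n k) k
      linarith
    · by_cases hB' : k ∈ B'
      · rw [Set.indicator_of_mem (Set.mem_union_right B hB'), Set.indicator_of_notMem hB,
          Set.indicator_of_mem hB', zero_add]
      · rw [Set.indicator_of_notMem (by simp [hB, hB'] : k ∉ B ∪ B'),
          Set.indicator_of_notMem hB, Set.indicator_of_notMem hB']
        simp
  have hadd := hd.add hd'
  rw [add_zero] at hadd
  refine squeeze_zero
    (fun n => tsum_nonneg fun k => Set.indicator_nonneg (fun k _ => hpos n k) k)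
    (fun n => ?_) hadd
  calc ∑' k, Set.indicator (B ∪ B') (a n) k
      ≤ ∑' k, (Set.indicator B (a n) k + Set.indicator B' (a n) k) :=
        Summable.tsum_le_tsum (key n) ((hsum n).indicator _)
          (((hsum n).indicator B).add ((hsum n).indicator B'))
    _ = _ := Summable.tsum_add ((hsum n).indicator B) ((hsum n).indicator B')

theorem stmt16 {X : Type*} [MetricSpace X] {a : ℕ → ℕ → ℝ} (hA : IsRegularMatrix a)
    {x : ℕ → X} {C : Set X} (hC : IsCompact C)
    (hbd : HasADensity a {k | x k ∉ C} 0) :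
    ({p | AStatClusterPt a x p}).Nonempty ∧ IsCompact {p | AStatClusterPt a x p} ∧
    {p | AStatClusterPt a x p} ⊆ C := by
  -- Γ ⊆ C
  have hsub : {p | AStatClusterPt a x p} ⊆ C := by
    intro p hp
    by_contra hpC
    obtain ⟨ε, hε, hball⟩ := Metric.isOpen_iff.1 hC.isClosed.isOpen_compl p hpC
    refine hp ε hε (dens_mono hA ?_ hbd)
    intro k hk
    exact hball hk
  -- Γ is closed
  have hclosed : IsClosed {p | AStatClusterPt a x p} := by
    rw [← isOpen_compl_iff, Metric.isOpen_iff]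
    intro p hp
    simp only [Set.mem_compl_iff, Set.mem_setOf_eq, AStatClusterPt] at hp
    push_neg at hp
    obtain ⟨ε, hε, hd⟩ := hp
    refine ⟨ε / 2, by linarith, fun q hq hqΓ => ?_⟩
    refine hqΓ (ε / 2) (by linarith) (dens_mono hA ?_ hd)
    intro k hk
    simp only [Set.mem_setOf_eq] at hk ⊢
    have := dist_triangle (x k) q p
    have hqp : dist q p < ε / 2 := hq
    linarith
  -- Γ nonempty
  have hne : ({p | AStatClusterPt a x p}).Nonempty := by
    by_contra hemp
    rw [Set.not_nonempty_iff_eq_empty] at hemp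
    have hall : ∀ p : X, ∃ ε > 0, HasADensity a {k | dist (x k) p < ε} 0 := by
      intro p
      have : ¬ AStatClusterPt a x p := fun h =>
        Set.eq_empty_iff_forall_notMem.1 hemp p h
      simp only [AStatClusterPt, not_forall, not_not, exists_prop] at this
      obtain ⟨ε, hε, hd⟩ := this
      exact ⟨ε, hε, hd⟩
    choose ε hε hd using hall
    obtain ⟨t, ht⟩ := hC.elim_nhds_subcover (fun p => Metric.ball p (ε p))
      (fun p _ => Metric.ball_mem_nhds p (hε p))
    have hUnion : ∀ s : Finset X, HasADensity a (⋃ p ∈ s, {k | dist (x k) p < ε p}) 0 := by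
      classical
      intro s
      induction s using Finset.induction_on with
      | empty =>
        have h0 : HasADensity a (∅ : Set ℕ) 0 := by
          simp only [HasADensity, Set.indicator_empty, tsum_zero]
          exact tendsto_const_nhds
        simpa using h0
      | insert _ _ hni ih =>
        rw [Finset.set_biUnion_insert]
        exact dens_union hA (hd _) ih
    have htot : HasADensity a (Set.univ : Set ℕ) 0 := by
      refine dens_mono hA ?_ (dens_union hA hbd (hUnion t))
      intro k _
      by_cases hk : x k ∈ C
      · right
        obtain ⟨p, hpt, hpk⟩ := Set.mem_iUnion₂.1 (ht.2 hk)
        exact Set.mem_biUnion hpt hpk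
      · exact Or.inl hk
    have h1 : Tendsto (fun n => ∑' k, a n k) atTop (𝓝 1) := hA.2.2.2.2
    simp only [HasADensity, Set.indicator_univ] at htot
    exact absurd (tendsto_nhds_unique htot h1) (by norm_num)
  exact ⟨hne, hC.of_isClosed_subset hclosed hsub, hsub⟩
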